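/- arXiv:2006.03115 — 3 statements merged into one kernel-verified Lean document; each statement's English description precedes it below -/
import Mathlib

section
/- The limit as n → ∞ of the ratio (n!·(n-2)·C_{n-1}²) / ((n+1)!·C_n²) equals 1/16 (and in particular is positive). Here the numerator counts the fully marked tree pair diagrams of size n of the special form guaranteeing north–south dynamics in Thompson's group V, and the denominator counts all fully marked tree pair diagrams of size n. -/
lemma catalan_rec (m : ℕ) :
    (m + 3) * catalan (m + 2) = 2 * (2 * m + 3) * catalan (m + 1) := by
  have h1 := succ_mul_catalan_eq_centralBinom (m + 1)
  have h2 := succ_mul_catalan_eq_centralBinom (m + 2)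
  have h3 := Nat.succ_mul_centralBinom_succ (m + 1)
  apply Nat.eq_of_mul_eq_mul_left (show 0 < m + 2 by omega)
  calc (m + 2) * ((m + 3) * catalan (m + 2))
      = (m + 2) * ((m + 2 + 1) * catalan (m + 2)) := by ring
    _ = (m + 2) * Nat.centralBinom (m + 2) := by rw [h2]
    _ = (m + 1 + 1) * Nat.centralBinom (m + 1 + 1) := by ring_nf
    _ = 2 * (2 * (m + 1) + 1) * Nat.centralBinom (m + 1) := h3
    _ = 2 * (2 * (m + 1) + 1) * ((m + 1 + 1) * catalan (m + 1)) := by rw [h1]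
    _ = (m + 2) * (2 * (2 * m + 3) * catalan (m + 1)) := by ring

lemma catalan_pos' (k : ℕ) : 0 < catalan k := by
  rcases Nat.eq_zero_or_pos (catalan k) with h | h
  · have h1 := succ_mul_catalan_eq_centralBinom k
    have h2 := Nat.centralBinom_pos k
    rw [h] at h1
    omega
  · exact h

/-- The fraction of fully marked tree pair diagrams of size `n` of the special
form guaranteeing north–south dynamics in Thompson's group `V`,
namely `n!·(n-2)·C_{n-1}²` out of all `(n+1)!·C_n²` diagrams, tends to `1/16`. -/
theorem density_north_south_V :
    Filter.Tendsto
      (fun n : ℕ => ((Nat.factorial n * (n - 2) * catalan (n - 1) ^ 2 : ℕ) : ℝ) /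
        ((Nat.factorial (n + 1) * catalan n ^ 2 : ℕ) : ℝ))
      Filter.atTop (nhds (1 / 16)) := by
  have key : Filter.Tendsto
      (fun n : ℕ => ((1 : ℝ) - 2 * (1 / n)) * (1 + 1 / n) / (4 * (2 - 1 / n) ^ 2))
      Filter.atTop (nhds (1 / 16)) := by
    have t : Filter.Tendsto (fun n : ℕ => 1 / (n : ℝ)) Filter.atTop (nhds 0) :=
      tendsto_one_div_atTop_nhds_zero_nat
    have : ((1 : ℝ) - 2 * 0) * (1 + 0) / (4 * (2 - 0) ^ 2) = 1 / 16 := by norm_num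
    rw [← this]
    exact Filter.Tendsto.div
      (((tendsto_const_nhds.sub (t.const_mul 2)).mul (tendsto_const_nhds.add t)))
      (((tendsto_const_nhds.sub t).pow 2).const_mul 4) (by norm_num)
  apply key.congr'
  filter_upwards [Filter.eventually_atTop.2 ⟨2, fun n hn => hn⟩] with n hn
  obtain ⟨m, rfl⟩ : ∃ m, n = m + 2 := ⟨n - 2, by omega⟩
  have hrec : ((m : ℝ) + 3) * catalan (m + 2) = 2 * (2 * m + 3) * catalan (m + 1) := by
    exact_mod_cast catalan_rec m
  have ha : (0 : ℝ) < catalan (m + 1) := by exact_mod_cast catalan_pos' (m + 1)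
  have hb : (0 : ℝ) < catalan (m + 2) := by exact_mod_cast catalan_pos' (m + 2)
  have hfac : (0 : ℝ) < (Nat.factorial (m + 2) : ℝ) := by
    exact_mod_cast Nat.factorial_pos (m + 2)
  have hfac3 : (Nat.factorial (m + 2 + 1) : ℝ) = ((m : ℝ) + 3) * Nat.factorial (m + 2) := by
    rw [Nat.factorial_succ]; push_cast; ring
  have hm2 : ((m : ℝ) + 2) ≠ 0 := by positivity
  have step1 : ((1 : ℝ) - 2 * (1 / (m + 2 : ℕ))) * (1 + 1 / (m + 2 : ℕ)) /
      (4 * (2 - 1 / (m + 2 : ℕ)) ^ 2)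
      = (m : ℝ) * ((m : ℝ) + 3) / (4 * (2 * (m : ℝ) + 3) ^ 2) := by
    push_cast
    have hle : (1 : ℝ) / ((m : ℝ) + 2) ≤ 1 := by
      rw [div_le_one (by positivity)]; linarith [Nat.cast_nonneg (α := ℝ) m]
    have hpos : (0 : ℝ) < 2 - 1 / ((m : ℝ) + 2) := by linarith
    rw [div_eq_div_iff (mul_pos (by norm_num) (pow_pos hpos 2)).ne' (by positivity)]
    field_simp
    ring
  rw [step1]
  simp only [Nat.add_sub_cancel]
  push_cast
  rw [hfac3, div_eq_div_iff (by positivity) (by positivity)]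
  linear_combination ((m : ℝ) * (Nat.factorial (m + 2) : ℝ) *
    (((m : ℝ) + 3) * (catalan (m + 2) : ℝ) + 2 * (2 * (m : ℝ) + 3) * (catalan (m + 1) : ℝ))) * hrec
end

section
/- The size of the sphere Sph₂(n) in the stratification for rank-2 subgroups of Thompson's group V, namely ((n+1)!·C_n²)², satisfies: the limit as n → ∞ of ((n+1)!·C_n²)² / ((16/e)^{2n} · n^{2n-3}) equals 2/π. In particular the sphere size is asymptotic to (16/e)^{2n}·n^{2n-3} up to the positive multiplicative constant 2/π. -/
open Filter Real Stirling Nat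

private lemma fact_eq_stirling (n : ℕ) (hn : 0 < n) :
    ((n)! : ℝ) = stirlingSeq n * (Real.sqrt (2 * n) * ((n : ℝ) / Real.exp 1) ^ n) := by
  have hx : (0:ℝ) < (n:ℝ) := by exact_mod_cast hn
  have h : Real.sqrt (2 * n) * ((n : ℝ) / Real.exp 1) ^ n ≠ 0 := by
    have h1 : (0:ℝ) < Real.sqrt (2*n) := Real.sqrt_pos.mpr (by linarith)
    have h2 : (0:ℝ) < ((n:ℝ)/Real.exp 1)^n := pow_pos (div_pos hx (Real.exp_pos 1)) n
    positivity
  rw [stirlingSeq]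
  exact (div_mul_cancel₀ _ h).symm

private lemma stirling_pos (n : ℕ) (hn : 0 < n) : 0 < stirlingSeq n := by
  obtain ⟨m, rfl⟩ : ∃ m, n = m + 1 := ⟨n - 1, by omega⟩
  exact stirlingSeq'_pos m

private lemma key_eq (n : ℕ) (hn : 1 ≤ n) :
    (((Nat.factorial (n + 1) * catalan n ^ 2) ^ 2 : ℕ) : ℝ) /
        ((16 / Real.exp 1) ^ (2 * n) * (n : ℝ) ^ (2 * (n : ℝ) - 3))
      = stirlingSeq (2*n) ^ 4 / stirlingSeq n ^ 6 *
          (2 * ((n:ℝ) / ((n:ℝ) + 1)) ^ 2) := by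
  have hx : (0:ℝ) < (n:ℝ) := by exact_mod_cast hn
  have hE : (0:ℝ) < Real.exp 1 := Real.exp_pos 1
  have hApos : 0 < stirlingSeq n := stirling_pos n (by omega)
  have hBpos : 0 < stirlingSeq (2*n) := stirling_pos (2*n) (by omega)
  -- central binomial / catalan identities
  have hF : ((2*n)! : ℝ) = ((n:ℝ) + 1) * (catalan n : ℝ) * ((n)! : ℝ)^2 := by
    have h1 : ((n + 1) * catalan n : ℕ) = n.centralBinom :=
      succ_mul_catalan_eq_centralBinom n
    have h2 : n.centralBinom * ((n)! * (n)!) = (2*n)! := by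
      have h := Nat.choose_mul_factorial_mul_factorial (show n ≤ 2*n by omega)
      rw [Nat.centralBinom]
      rw [show 2*n - n = n by omega] at h
      rw [← h]; ring
    have h1' : ((n:ℝ) + 1) * (catalan n : ℝ) = (n.centralBinom : ℝ) := by
      exact_mod_cast congrArg (Nat.cast : ℕ → ℝ) h1
    have h2' : (n.centralBinom : ℝ) * (((n)! : ℝ) * ((n)! : ℝ)) = ((2*n)! : ℝ) := by
      exact_mod_cast congrArg (Nat.cast : ℕ → ℝ) h2
    rw [← h2', ← h1']; ring
  have hfs : (((n+1))! : ℝ) = ((n:ℝ) + 1) * ((n)! : ℝ) := by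
    rw [Nat.factorial_succ]; push_cast; ring
  have hfacpos : (0:ℝ) < ((n)! : ℝ) := by exact_mod_cast Nat.factorial_pos n
  have hN : (((Nat.factorial (n + 1) * catalan n ^ 2) ^ 2 : ℕ) : ℝ)
      = ((2*n)! : ℝ)^4 / (((n:ℝ) + 1)^2 * ((n)! : ℝ)^6) := by
    rw [eq_div_iff (by positivity)]
    push_cast
    rw [hfs]
    have hc : (catalan n : ℝ) = ((2*n)! : ℝ) / (((n:ℝ)+1) * ((n)! : ℝ)^2) := by
      rw [eq_div_iff (by positivity), hF]; ring
    rw [hc]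
    field_simp
  -- rpow part
  have hD : ((n:ℝ)) ^ (2 * ((n:ℝ)) - 3) = (n:ℝ) ^ (2*n) / (n:ℝ) ^ (3:ℕ) := by
    rw [show 2 * ((n:ℝ)) - 3 = ((2*n : ℕ) : ℝ) - ((3:ℕ) : ℝ) by push_cast; ring,
      Real.rpow_sub hx, Real.rpow_natCast, Real.rpow_natCast]
  -- Stirling substitutions
  have h1 := fact_eq_stirling n (by omega)
  have h2 := fact_eq_stirling (2*n) (by omega)
  push_cast at h2
  have hs6 : Real.sqrt (2*(n:ℝ)) ^ 6 = (2*(n:ℝ))^3 := by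
    have h := Real.sq_sqrt (show (0:ℝ) ≤ 2*(n:ℝ) by positivity)
    calc Real.sqrt (2*(n:ℝ))^6 = (Real.sqrt (2*(n:ℝ))^2)^3 := by ring
    _ = (2*(n:ℝ))^3 := by rw [h]
  have hs4 : Real.sqrt (2*(2*(n:ℝ))) ^ 4 = (2*(2*(n:ℝ)))^2 := by
    have h := Real.sq_sqrt (show (0:ℝ) ≤ 2*(2*(n:ℝ)) by positivity)
    calc Real.sqrt (2*(2*(n:ℝ)))^4 = (Real.sqrt (2*(2*(n:ℝ)))^2)^2 := by ring
    _ = (2*(2*(n:ℝ)))^2 := by rw [h]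
  have h6 : ((n)! : ℝ)^6 = stirlingSeq n^6 * ((2*(n:ℝ))^3 * (((n:ℝ)/Real.exp 1)^n)^6) := by
    rw [h1, mul_pow, mul_pow, hs6]
  have h4 : ((2*n)! : ℝ)^4 = stirlingSeq (2*n)^4 *
      ((2*(2*(n:ℝ)))^2 * ((2*(n:ℝ)/Real.exp 1)^(2*n))^4) := by
    rw [h2, mul_pow, mul_pow, hs4]
  have h16 : ((16:ℝ)/Real.exp 1)^(2*n) = 2^(8*n)/(Real.exp 1)^(2*n) := by
    rw [div_pow]
    congr 1
    rw [show (16:ℝ) = 2^4 by norm_num, ← pow_mul]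
    congr 1
    ring
  rw [hN, hD, h4, h6, h16]
  have hxne : (n:ℝ) ≠ 0 := ne_of_gt hx
  have hEne : Real.exp 1 ≠ 0 := ne_of_gt hE
  have hx1 : (n:ℝ) + 1 ≠ 0 := by positivity
  have hAne : stirlingSeq n ≠ 0 := ne_of_gt hApos
  set E : ℝ := Real.exp 1 with hEdef
  field_simp
  simp only [div_pow, ← pow_mul]
  field_simp
  ring

/-- The size `((n+1)!·C_n²)²` of the sphere `Sph₂(n)` for rank-2 subgroups of
Thompson's group `V` satisfies `((n+1)!·C_n²)² / ((16/e)^(2n) · n^(2n - 3)) → 2/π`. -/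
theorem sphere2_V_asymptotics :
    Filter.Tendsto
      (fun n : ℕ => (((Nat.factorial (n + 1) * catalan n ^ 2) ^ 2 : ℕ) : ℝ) /
        ((16 / Real.exp 1) ^ (2 * n) * (n : ℝ) ^ (2 * (n : ℝ) - 3)))
      Filter.atTop (nhds (2 / Real.pi)) := by
  have hs : Tendsto stirlingSeq atTop (nhds (Real.sqrt Real.pi)) :=
    tendsto_stirlingSeq_sqrt_pi
  have h2n : Tendsto (fun n : ℕ => 2*n) atTop atTop :=
    tendsto_atTop_mono (fun n => by simp only [id_eq]; omega) tendsto_id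
  have hs2 : Tendsto (fun n : ℕ => stirlingSeq (2*n)) atTop (nhds (Real.sqrt Real.pi)) :=
    hs.comp h2n
  have hpi : (0:ℝ) < Real.pi := Real.pi_pos
  have hp2 : Real.sqrt Real.pi ^ 2 = Real.pi := Real.sq_sqrt hpi.le
  have hne : Real.sqrt Real.pi ^ 6 ≠ 0 := by
    have : (0:ℝ) < Real.sqrt Real.pi := Real.sqrt_pos.mpr hpi
    positivity
  have hdiv : Tendsto (fun n : ℕ => (n:ℝ) / ((n:ℝ) + 1)) atTop (nhds 1) :=
    tendsto_natCast_div_add_atTop (1:ℝ)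
  have hlim : Tendsto
      (fun n : ℕ => stirlingSeq (2*n) ^ 4 / stirlingSeq n ^ 6 *
        (2 * ((n:ℝ) / ((n:ℝ) + 1)) ^ 2)) atTop
      (nhds (Real.sqrt Real.pi ^ 4 / Real.sqrt Real.pi ^ 6 * (2 * 1 ^ 2))) :=
    ((hs2.pow 4).div (hs.pow 6) hne).mul ((tendsto_const_nhds).mul (hdiv.pow 2))
  have hval : Real.sqrt Real.pi ^ 4 / Real.sqrt Real.pi ^ 6 * (2 * 1 ^ 2)
      = 2 / Real.pi := by
    have h4 : Real.sqrt Real.pi ^ 4 = Real.pi ^ 2 := by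
      rw [show (4:ℕ) = 2*2 from rfl, pow_mul, hp2]
    have h6 : Real.sqrt Real.pi ^ 6 = Real.pi ^ 3 := by
      rw [show (6:ℕ) = 2*3 from rfl, pow_mul, hp2]
    rw [h4, h6]
    field_simp
  rw [hval] at hlim
  refine hlim.congr' ?_
  filter_upwards [eventually_ge_atTop 1] with n hn
  exact (key_eq n hn).symm
end

section
/- The limit as n → ∞ of the ratio (C_{n-3}⁴ · ((n-4)!)² · (n-1)² · (n-2) · (n-3)⁵ · (n-4)²) / (C_n⁴ · ((n+1)!)²) equals 1/2²⁴ (and in particular is positive). Here the numerator counts the pairs (u,v) of fully marked tree pair diagrams of size n of the special ping-pong form generating a free subgroup of rank 2 in Thompson's group V, and the denominator counts all pairs of fully marked tree pair diagrams of size n. -/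
open Polynomial Filter

/-- Numerator polynomial of the density ratio after the reindexing `n = m + 4`. -/
noncomputable def densityFreeVNum : ℝ[X] :=
  X^2*(X+C 1)^5*(X+C 2)^5*(X+C 3)^8*(X+C 4)^6*(X+C 5)^2

/-- Denominator polynomial of the density ratio after the reindexing `n = m + 4`. -/
noncomputable def densityFreeVDen : ℝ[X] :=
  (X+C 1)^2*(X+C 2)^2*(C 2*X+C 3)^4*(C 2*X+C 4)^4*(C 2*X+C 5)^4*(C 2*X+C 6)^4*(C 2*X+C 7)^4*(C 2*X+C 8)^4

lemma densityFreeV_deg : densityFreeVNum.degree = densityFreeVDen.degree := by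
  have h1 : densityFreeVNum.degree = 28 := by unfold densityFreeVNum; compute_degree!
  have h2 : densityFreeVDen.degree = 28 := by unfold densityFreeVDen; compute_degree!
  rw [h1, h2]

lemma densityFreeV_lcN : densityFreeVNum.leadingCoeff = 1 := by
  unfold densityFreeVNum
  have h1 : (X + (1:ℝ[X])).leadingCoeff = 1 := by rw [← C_1]; exact leadingCoeff_X_add_C 1
  simp [leadingCoeff_mul, leadingCoeff_pow, leadingCoeff_X_add_C, h1]

lemma densityFreeV_lcD : densityFreeVDen.leadingCoeff = 2^24 := by
  unfold densityFreeVDen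
  have h2 : ∀ r : ℝ, (C 2 * X + C r).leadingCoeff = 2 := fun r => leadingCoeff_linear two_ne_zero
  have h1 : (X + (1:ℝ[X])).leadingCoeff = 1 := by rw [← C_1]; exact leadingCoeff_X_add_C 1
  simp [leadingCoeff_mul, leadingCoeff_pow, leadingCoeff_X_add_C, h2, h1]
  norm_num

lemma densityFreeV_keylim : Tendsto (fun m : ℕ =>
    ((m:ℝ)^2*((m:ℝ)+1)^5*((m:ℝ)+2)^5*((m:ℝ)+3)^8*((m:ℝ)+4)^6*((m:ℝ)+5)^2) /
    (((m:ℝ)+1)^2*((m:ℝ)+2)^2*(2*(m:ℝ)+3)^4*(2*(m:ℝ)+4)^4*(2*(m:ℝ)+5)^4*(2*(m:ℝ)+6)^4*(2*(m:ℝ)+7)^4*(2*(m:ℝ)+8)^4))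
    atTop (nhds (1 / 2 ^ 24)) := by
  have h := (densityFreeVNum.div_tendsto_leadingCoeff_div_of_degree_eq densityFreeVDen
    densityFreeV_deg).comp (tendsto_natCast_atTop_atTop (R := ℝ))
  rw [densityFreeV_lcN, densityFreeV_lcD] at h
  refine h.congr fun m => ?_
  simp [Function.comp, densityFreeVNum, densityFreeVDen]

lemma cat_fact (n : ℕ) : catalan n * (n.factorial * (n+1).factorial) = (2*n).factorial := by
  have h1 := succ_mul_catalan_eq_centralBinom n
  have h2 := Nat.choose_mul_factorial_mul_factorial (Nat.le_mul_of_pos_left n (by norm_num : 0 < 2))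
  rw [show 2*n - n = n by omega] at h2
  calc catalan n * (n.factorial * (n+1).factorial)
      = ((n+1) * catalan n) * n.factorial * n.factorial := by
        rw [Nat.factorial_succ]; ring
    _ = Nat.centralBinom n * n.factorial * n.factorial := by rw [h1]
    _ = (2*n).factorial := by rw [Nat.centralBinom]; exact h2

lemma catR (k : ℕ) : (catalan k : ℝ) = (2*k).factorial / (k.factorial * (k+1).factorial) := by
  rw [eq_div_iff (by positivity)]
  exact_mod_cast cat_fact k

lemma densityFreeV_eq (m : ℕ) :
    ((catalan ((m+4) - 3) ^ 4 * Nat.factorial ((m+4) - 4) ^ 2 * ((m+4) - 1) ^ 2 *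
        ((m+4) - 2) * ((m+4) - 3) ^ 5 * ((m+4) - 4) ^ 2 : ℕ) : ℝ) /
      ((catalan (m+4) ^ 4 * Nat.factorial ((m+4) + 1) ^ 2 : ℕ) : ℝ) =
    ((m:ℝ)^2*((m:ℝ)+1)^5*((m:ℝ)+2)^5*((m:ℝ)+3)^8*((m:ℝ)+4)^6*((m:ℝ)+5)^2) /
    (((m:ℝ)+1)^2*((m:ℝ)+2)^2*(2*(m:ℝ)+3)^4*(2*(m:ℝ)+4)^4*(2*(m:ℝ)+5)^4*(2*(m:ℝ)+6)^4*(2*(m:ℝ)+7)^4*(2*(m:ℝ)+8)^4) := by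
  have s3 : (m+4) - 3 = m+1 := rfl
  have s4 : (m+4) - 4 = m := rfl
  have s1 : (m+4) - 1 = m+3 := rfl
  have s2 : (m+4) - 2 = m+2 := rfl
  rw [s1, s2, s3, s4]
  have fs : ∀ k : ℕ, (k+1).factorial = (k+1) * k.factorial := Nat.factorial_succ
  have f1 : ((m+1).factorial : ℝ) = ((m:ℝ)+1) * m.factorial := by
    rw [fs]; push_cast; ring
  have f2 : ((m+2).factorial : ℝ) = ((m:ℝ)+2)*((m:ℝ)+1) * m.factorial := by
    rw [show m+2 = (m+1)+1 from rfl, fs, fs]; push_cast; ring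
  have f4 : ((m+4).factorial : ℝ) = ((m:ℝ)+4)*((m:ℝ)+3)*((m:ℝ)+2)*((m:ℝ)+1) * m.factorial := by
    rw [show m+4 = ((((m+3)+1) : ℕ)) from rfl, fs, show m+3=(m+2)+1 from rfl, fs,
      show m+2=(m+1)+1 from rfl, fs, fs]; push_cast; ring
  have f5 : ((m+5).factorial : ℝ) = ((m:ℝ)+5)*((m:ℝ)+4)*((m:ℝ)+3)*((m:ℝ)+2)*((m:ℝ)+1) * m.factorial := by
    rw [show m+5 = (m+4)+1 from rfl, fs, show m+4 = (m+3)+1 from rfl, fs, show m+3=(m+2)+1 from rfl, fs,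
      show m+2=(m+1)+1 from rfl, fs, fs]; push_cast; ring
  have g8 : ((2*(m+4)).factorial : ℝ) =
      (2*(m:ℝ)+8)*(2*(m:ℝ)+7)*(2*(m:ℝ)+6)*(2*(m:ℝ)+5)*(2*(m:ℝ)+4)*(2*(m:ℝ)+3) * (2*(m+1)).factorial := by
    rw [show 2*(m+4) = (2*(m+1)+5)+1 by ring, fs, show 2*(m+1)+5 = (2*(m+1)+4)+1 from rfl, fs,
      show 2*(m+1)+4 = (2*(m+1)+3)+1 from rfl, fs, show 2*(m+1)+3 = (2*(m+1)+2)+1 from rfl, fs,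
      show 2*(m+1)+2 = (2*(m+1)+1)+1 from rfl, fs, show 2*(m+1)+1 = (2*(m+1))+1 from rfl, fs]
    push_cast; ring
  have hm : (m.factorial : ℝ) ≠ 0 := by positivity
  have hb : ((2*(m+1)).factorial : ℝ) ≠ 0 := by positivity
  push_cast
  rw [catR (m+1), catR (m+4), show ((m+4)+1 : ℕ) = m+5 from rfl, show ((m+1)+1 : ℕ) = m+2 from rfl]
  rw [f1, f2, f4, f5, g8]
  field_simp

/-- The fraction of ping-pong pairs generating a free subgroup of rank 2 in
Thompson's group `V`, namely
`C_{n-3}⁴·((n-4)!)²·(n-1)²·(n-2)·(n-3)⁵·(n-4)²` out of all `C_n⁴·((n+1)!)²`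
pairs of fully marked tree pair diagrams of size `n`, tends to `1/2²⁴`. -/
theorem density_free_V :
    Filter.Tendsto
      (fun n : ℕ => ((catalan (n - 3) ^ 4 * Nat.factorial (n - 4) ^ 2 * (n - 1) ^ 2 *
          (n - 2) * (n - 3) ^ 5 * (n - 4) ^ 2 : ℕ) : ℝ) /
        ((catalan n ^ 4 * Nat.factorial (n + 1) ^ 2 : ℕ) : ℝ))
      Filter.atTop (nhds (1 / 2 ^ 24)) := by
  rw [← Filter.tendsto_add_atTop_iff_nat 4]
  exact densityFreeV_keylim.congr fun m => (densityFreeV_eq m).symm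
end
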